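/- If φ is KH-kinematic expansive then φ is KH-expansive and kinematic expansive; conversely, if φ is KH-expansive and kinematic expansive then φ is KH-kinematic expansive. -/

import Mathlib

open Filter Topology

private lemma flow_nat_period {X : Type*} (φ : ℝ → X → X)
    (h0 : ∀ x, φ 0 x = x) (hadd : ∀ t s x, φ (t + s) x = φ t (φ s x))
    {u : ℝ} {z : X} (hz : φ u z = z) : ∀ k : ℕ, φ ((k : ℝ) * u) z = z := by
  intro k
  induction k with
  | zero => simpa using h0 z
  | succ n ih =>
      have e : ((n + 1 : ℕ) : ℝ) * u = u + (n : ℝ) * u := by push_cast; ring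
      rw [e, hadd, ih, hz]

private lemma flow_int_period {X : Type*} (φ : ℝ → X → X)
    (h0 : ∀ x, φ 0 x = x) (hadd : ∀ t s x, φ (t + s) x = φ t (φ s x))
    {u : ℝ} {z : X} (hz : φ u z = z) : ∀ m : ℤ, φ ((m : ℝ) * u) z = z := by
  intro m
  rcases Int.eq_nat_or_neg m with ⟨n, rfl | rfl⟩
  · have := flow_nat_period φ h0 hadd hz n
    have e : (((n : ℤ) : ℝ)) * u = ((n : ℕ) : ℝ) * u := by push_cast; ring
    rw [e]; exact this
  · have hn := flow_nat_period φ h0 hadd hz n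
    have h1 : φ (-((n : ℝ) * u) + (n : ℝ) * u) z = z := by
      rw [show -((n : ℝ) * u) + (n : ℝ) * u = (0:ℝ) by ring]; exact h0 z
    rw [hadd, hn] at h1
    have e : ((-(n : ℤ) : ℤ) : ℝ) * u = -((n : ℝ) * u) := by push_cast; ring
    rw [e]; exact h1

/-- On a compact set of non-fixed points, there are no arbitrarily small periods. -/
private lemma aux_P1 {X : Type*} [MetricSpace X] [CompactSpace X]
    (φ : ℝ → X → X) (hcont : Continuous fun p : ℝ × X => φ p.1 p.2)
    (h0 : ∀ x, φ 0 x = x) (hadd : ∀ t s x, φ (t + s) x = φ t (φ s x))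
    {S : Set X} (hSc : IsCompact S) (hS : ∀ z ∈ S, ∃ t, φ t z ≠ z) :
    ∃ P0 > (0:ℝ), ∀ z ∈ S, ∀ u : ℝ, 0 < u → u ≤ P0 → φ u z ≠ z := by
  by_contra hcon
  push_neg at hcon
  have H : ∀ n : ℕ, ∃ q : X × ℝ, q.1 ∈ S ∧ 0 < q.2 ∧ q.2 ≤ 1/(n+1) ∧ φ q.2 q.1 = q.1 := by
    intro n
    obtain ⟨z, hzS, u, hu0, hu1, hu2⟩ := hcon (1/(n+1)) (by positivity)
    exact ⟨(z, u), hzS, hu0, hu1, hu2⟩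
  choose q hq1 hq2 hq3 hq4 using H
  obtain ⟨z, hzS, g, hg, hw⟩ := hSc.tendsto_subseq (x := fun n => (q n).1) hq1
  have hzfix : ∀ t, φ t z = z := by
    intro t
    set w : ℕ → X := fun n => (q (g n)).1 with hwdef
    set u : ℕ → ℝ := fun n => (q (g n)).2 with hudef
    have hu0 : ∀ n, 0 < u n := fun n => hq2 _
    set m : ℕ → ℤ := fun n => ⌊t / u n⌋ with hmdef
    set r : ℕ → ℝ := fun n => t - (m n : ℝ) * u n with hrdef
    have hml : ∀ n, (m n : ℝ) * u n ≤ t := by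
      intro n
      exact (le_div_iff₀ (hu0 n)).mp (Int.floor_le _)
    have hmu : ∀ n, t < ((m n : ℝ) + 1) * u n := by
      intro n
      have := Int.lt_floor_add_one (t / u n)
      have h2 := (div_lt_iff₀ (hu0 n)).mp this
      push_cast at h2 ⊢
      linarith
    have hr0 : ∀ n, 0 ≤ r n := by
      intro n; simp only [hrdef]; linarith [hml n]
    have hru : ∀ n, r n < u n := by
      intro n; simp only [hrdef]; nlinarith [hmu n]
    have hulim : Tendsto u atTop (𝓝 0) := by
      apply squeeze_zero (fun n => (hu0 n).le) (fun n => ?_)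
        tendsto_one_div_add_atTop_nhds_zero_nat
      have h1 : u n ≤ 1 / ((g n : ℝ) + 1) := hq3 (g n)
      have h2 : (1 : ℝ) / ((g n : ℝ) + 1) ≤ 1 / ((n : ℝ) + 1) := by
        apply one_div_le_one_div_of_le (by positivity)
        have : (n : ℝ) ≤ (g n : ℝ) := by exact_mod_cast hg.le_apply
        linarith
      linarith
    have hrlim : Tendsto r atTop (𝓝 0) :=
      squeeze_zero hr0 (fun n => (hru n).le) hulim
    have key : ∀ n, φ t (w n) = φ (r n) (w n) := by
      intro n
      have h1 : t = r n + (m n : ℝ) * u n := by simp only [hrdef]; ring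
      calc φ t (w n) = φ (r n + (m n : ℝ) * u n) (w n) := by rw [← h1]
        _ = φ (r n) (φ ((m n : ℝ) * u n) (w n)) := hadd _ _ _
        _ = φ (r n) (w n) := by
            rw [flow_int_period φ h0 hadd (hq4 (g n)) (m n)]
    have ct : Continuous fun a : X => φ t a :=
      hcont.comp (Continuous.prodMk continuous_const continuous_id)
    have h1 : Tendsto (fun n => φ t (w n)) atTop (𝓝 (φ t z)) := (ct.tendsto z).comp hw
    have h2 : Tendsto (fun n => φ (r n) (w n)) atTop (𝓝 z) := by
      have hpair : Tendsto (fun n => (r n, w n)) atTop (𝓝 ((0:ℝ), z)) :=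
        hrlim.prodMk_nhds hw
      have h3 := (hcont.tendsto ((0:ℝ), z)).comp hpair
      simpa [h0, Function.comp_def] using h3
    exact tendsto_nhds_unique (h1.congr key) h2
  obtain ⟨t0, ht0⟩ := hS z hzS
  exact ht0 (hzfix t0)

/-- Uniform small-time continuity of the flow. -/
private lemma aux_eta {X : Type*} [MetricSpace X] [CompactSpace X]
    (φ : ℝ → X → X) (hcont : Continuous fun p : ℝ × X => φ p.1 p.2)
    (h0 : ∀ x, φ 0 x = x) :
    ∀ θ > (0:ℝ), ∃ η > (0:ℝ), ∀ (w : X) (h : ℝ), |h| ≤ η → dist (φ h w) w < θ := by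
  intro θ hθ
  by_contra hcon
  push_neg at hcon
  have H : ∀ n : ℕ, ∃ q : X × ℝ, |q.2| ≤ 1/(n+1) ∧ θ ≤ dist (φ q.2 q.1) q.1 := by
    intro n
    obtain ⟨w, h, hh, hd⟩ := hcon (1/(n+1)) (by positivity)
    exact ⟨(w, h), hh, hd⟩
  choose q hq1 hq2 using H
  obtain ⟨w, -, g, hg, hw⟩ := isCompact_univ.tendsto_subseq
    (x := fun n => (q n).1) (fun n => Set.mem_univ _)
  have hh : Tendsto (fun n => (q (g n)).2) atTop (𝓝 0) := by
    apply squeeze_zero_norm (fun n => ?_) tendsto_one_div_add_atTop_nhds_zero_nat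
    have h1 : |(q (g n)).2| ≤ 1 / ((g n : ℝ) + 1) := hq1 (g n)
    have h2 : (1 : ℝ) / ((g n : ℝ) + 1) ≤ 1 / ((n : ℝ) + 1) := by
      apply one_div_le_one_div_of_le (by positivity)
      have : (n : ℝ) ≤ (g n : ℝ) := by exact_mod_cast hg.le_apply
      linarith
    calc ‖(q (g n)).2‖ = |(q (g n)).2| := rfl
      _ ≤ 1 / ((n : ℝ) + 1) := h1.trans h2
  have hlim : Tendsto (fun n => dist (φ (q (g n)).2 (q (g n)).1) (q (g n)).1) atTop (𝓝 0) := by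
    have hpair : Tendsto (fun n => ((q (g n)).2, (q (g n)).1)) atTop (𝓝 ((0:ℝ), w)) :=
      hh.prodMk_nhds hw
    have h3 := (hcont.tendsto ((0:ℝ), w)).comp hpair
    have h4 := h3.dist hw
    simpa [h0] using h4
  have hfin : θ ≤ 0 := ge_of_tendsto' hlim (fun n => hq2 (g n))
  linarith

/-- Separation constant at time ±η₀ on a compact set with no period η₀. -/
private lemma aux_sep {X : Type*} [MetricSpace X]
    (φ : ℝ → X → X) (hcont : Continuous fun p : ℝ × X => φ p.1 p.2)
    {S : Set X} (hSc : IsCompact S) {η0 : ℝ}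
    (hne : ∀ z ∈ S, φ η0 z ≠ z ∧ φ (-η0) z ≠ z) :
    ∃ ρ > (0:ℝ), ∀ z ∈ S, ρ ≤ dist z (φ η0 z) ∧ ρ ≤ dist z (φ (-η0) z) := by
  rcases S.eq_empty_or_nonempty with hS | hS
  · exact ⟨1, one_pos, by simp [hS]⟩
  · have c1 : Continuous fun z : X => φ η0 z :=
      hcont.comp (Continuous.prodMk continuous_const continuous_id)
    have c2 : Continuous fun z : X => φ (-η0) z :=
      hcont.comp (Continuous.prodMk continuous_const continuous_id)
    have cF : Continuous fun z : X => min (dist z (φ η0 z)) (dist z (φ (-η0) z)) :=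
      (continuous_id.dist c1).min (continuous_id.dist c2)
    obtain ⟨z0, hz0S, hz0min⟩ := hSc.exists_isMinOn hS cF.continuousOn
    have hz0 : ∀ z ∈ S, min (dist z0 (φ η0 z0)) (dist z0 (φ (-η0) z0)) ≤
        min (dist z (φ η0 z)) (dist z (φ (-η0) z)) := fun z hz => hz0min hz
    refine ⟨_, ?_, fun z hz =>
      ⟨le_trans (hz0 z hz) (min_le_left _ _), le_trans (hz0 z hz) (min_le_right _ _)⟩⟩
    exact lt_min (dist_pos.mpr (Ne.symm (hne z0 hz0S).1))
      (dist_pos.mpr (Ne.symm (hne z0 hz0S).2))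

/-- KH-expansivity forces points δ₁-close to a fixed point to equal it. -/
private lemma aux_fix {X : Type*} [MetricSpace X]
    (φ : ℝ → X → X) (h0 : ∀ x, φ 0 x = x)
    {δ1 : ℝ} (hδ1 : 0 < δ1)
    (hKH : ∀ (x y : X) (s : ℝ → ℝ), Continuous s → s 0 = 0 →
      (∀ t, max (dist (φ t x) (φ (s t) x)) (dist (φ t x) (φ (s t) y)) < δ1) →
      ∃ τ : ℝ, y = φ τ x)
    {p w : X} (hp : ∀ t, φ t p = p) (hd : dist p w < δ1) : w = p := by
  have hyp : ∀ t, max (dist (φ t p) (φ ((fun _ => (0:ℝ)) t) p))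
      (dist (φ t p) (φ ((fun _ => (0:ℝ)) t) w)) < δ1 := by
    intro t
    show max (dist (φ t p) (φ 0 p)) (dist (φ t p) (φ 0 w)) < δ1
    rw [hp t, hp 0, h0 w, dist_self]
    exact max_lt hδ1 hd
  obtain ⟨τ, hτ⟩ := hKH p w (fun _ => 0) continuous_const rfl hyp
  rw [hτ, hp τ]

theorem stmt15 {X : Type*} [MetricSpace X] [CompactSpace X]
    (φ : ℝ → X → X)
    (hcont : Continuous fun p : ℝ × X => φ p.1 p.2)
    (h0 : ∀ x, φ 0 x = x)
    (hadd : ∀ t s x, φ (t + s) x = φ t (φ s x)) :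
    (∀ ε > (0:ℝ), ∃ δ > (0:ℝ), ∀ (x y : X) (s : ℝ → ℝ),
        Continuous s → s 0 = 0 →
        (∀ t, max (dist (φ t x) (φ (s t) x)) (dist (φ t x) (φ (s t) y)) < δ) →
        ∃ τ : ℝ, |τ| < ε ∧ y = φ τ x) ↔
      ((∃ δ > (0:ℝ), ∀ (x y : X) (s : ℝ → ℝ),
          Continuous s → s 0 = 0 →
          (∀ t, max (dist (φ t x) (φ (s t) x)) (dist (φ t x) (φ (s t) y)) < δ) →
          ∃ τ : ℝ, y = φ τ x) ∧
        (∀ ε > (0:ℝ), ∃ δ > (0:ℝ), ∀ x y : X,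
          (∀ t, dist (φ t x) (φ t y) < δ) → ∃ τ : ℝ, |τ| < ε ∧ y = φ τ x)) := by
  constructor
  · intro h
    refine ⟨?_, ?_⟩
    · obtain ⟨δ, hδ, H⟩ := h 1 one_pos
      exact ⟨δ, hδ, fun x y s hs hs0 hm => (H x y s hs hs0 hm).imp fun τ ht => ht.2⟩
    · intro ε hε
      obtain ⟨δ, hδ, H⟩ := h ε hε
      refine ⟨δ, hδ, fun x y hxy => H x y (fun t => t) continuous_id rfl fun t => ?_⟩
      show max (dist (φ t x) (φ t x)) (dist (φ t x) (φ t y)) < δ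
      rw [dist_self]
      exact max_lt hδ (hxy t)
  · rintro ⟨⟨δ1, hδ1, hKH⟩, hkin⟩
    intro ε hε
    obtain ⟨δ2, hδ2, hk⟩ := hkin ε hε
    set Xs : Set X := {z | ∀ p : X, (∀ t, φ t p = p) → δ1 ≤ dist z p} with hXsdef
    have hXsc : IsCompact Xs := by
      have hcl : IsClosed Xs := by
        have he : Xs = ⋂ (p : X), ⋂ (_ : ∀ t, φ t p = p), {z | δ1 ≤ dist z p} := by
          ext z
          simp only [hXsdef, Set.mem_setOf_eq, Set.mem_iInter]
        rw [he]
        exact isClosed_iInter fun p => isClosed_iInter fun _ =>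
          isClosed_le continuous_const (continuous_id.dist continuous_const)
      exact hcl.isCompact
    have hSmove : ∀ z ∈ Xs, ∃ t, φ t z ≠ z := by
      intro z hz
      by_contra hcc
      push_neg at hcc
      have h1 : δ1 ≤ dist z z := hz z hcc
      rw [dist_self] at h1
      linarith
    obtain ⟨P0, hP0, hper⟩ := aux_P1 φ hcont h0 hadd hXsc hSmove
    obtain ⟨ηM, hηM, hMod⟩ := aux_eta φ hcont h0 (δ2/2) (by positivity)
    set η0 : ℝ := min ηM P0 with hη0def
    have hη0p : (0:ℝ) < η0 := lt_min hηM hP0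
    have hnoper : ∀ z ∈ Xs, φ η0 z ≠ z ∧ φ (-η0) z ≠ z := by
      intro z hz
      constructor
      · exact hper z hz η0 hη0p (min_le_right _ _)
      · intro hcc
        apply hper z hz η0 hη0p (min_le_right _ _)
        have h1 : φ (η0 + -η0) z = z := by
          rw [show η0 + -η0 = (0:ℝ) by ring]; exact h0 z
        rw [hadd, hcc] at h1
        exact h1
    obtain ⟨ρ, hρ, hsep⟩ := aux_sep φ hcont hXsc hnoper
    refine ⟨min δ1 (min (δ2/2) (ρ/2)),
      lt_min hδ1 (lt_min (by linarith) (by linarith)), ?_⟩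
    intro x y s hs hs0 hmax
    have hmax1 : ∀ t, dist (φ t x) (φ (s t) x) < min δ1 (min (δ2/2) (ρ/2)) :=
      fun t => (le_max_left _ _).trans_lt (hmax t)
    have hmax2 : ∀ t, dist (φ t x) (φ (s t) y) < min δ1 (min (δ2/2) (ρ/2)) :=
      fun t => (le_max_right _ _).trans_lt (hmax t)
    by_cases hfix : ∀ t, φ t x = x
    · -- x is a fixed point
      have hd : dist x y < δ1 := by
        have h1 := hmax2 0
        simp only [hs0, h0] at h1
        exact h1.trans_le (min_le_left _ _)
      have hyx : y = x := aux_fix φ h0 hδ1 hKH hfix hd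
      exact ⟨0, by simpa using hε, by rw [hyx, h0]⟩
    · -- x is not fixed : its orbit lies in Xs
      have horb : ∀ t, φ t x ∈ Xs := by
        intro t
        show ∀ p : X, (∀ t', φ t' p = p) → δ1 ≤ dist (φ t x) p
        intro p hp
        by_contra hlt
        push_neg at hlt
        have hfp : φ t x = p := aux_fix φ h0 hδ1 hKH hp (by rwa [dist_comm] at hlt)
        apply hfix
        have hxp : x = p := by
          have h1 : φ (-t + t) x = x := by
            rw [show -t + t = (0:ℝ) by ring]; exact h0 x
          rw [hadd, hfp, hp] at h1
          exact h1.symm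
        intro u; rw [hxp]; exact hp u
      -- synchronization: s never drifts by η0
      have hsync : ∀ t, |s t - t| < η0 := by
        by_contra hcc
        push_neg at hcc
        obtain ⟨t1, ht1⟩ := hcc
        have hDc : Continuous fun t => |s t - t| := (hs.sub continuous_id).abs
        have hD0 : |s 0 - 0| = 0 := by rw [hs0]; simp
        have hex : ∃ c, |s c - c| = η0 := by
          rcases le_total 0 t1 with hle | hle
          · have him := intermediate_value_Icc hle hDc.continuousOn
            have hmem : η0 ∈ Set.Icc (|s 0 - 0|) (|s t1 - t1|) := by
              rw [hD0]; exact ⟨hη0p.le, ht1⟩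
            obtain ⟨c, -, hc⟩ := him hmem
            exact ⟨c, hc⟩
          · have him := intermediate_value_Icc' hle hDc.continuousOn
            have hmem : η0 ∈ Set.Icc (|s 0 - 0|) (|s t1 - t1|) := by
              rw [hD0]; exact ⟨hη0p.le, ht1⟩
            obtain ⟨c, -, hc⟩ := him hmem
            exact ⟨c, hc⟩
        obtain ⟨c, hc⟩ := hex
        have hsc := hsep _ (horb c)
        have heq : φ (s c) x = φ (s c - c) (φ c x) := by
          rw [← hadd, show s c - c + c = s c by ring]
        have hltρ : dist (φ c x) (φ (s c) x) < ρ/2 :=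
          (hmax1 c).trans_le ((min_le_right _ _).trans (min_le_right _ _))
        rcases (abs_eq hη0p.le).mp hc with h | h
        · have h2 := hsc.1
          rw [← h, ← heq] at h2
          linarith
        · have h2 := hsc.2
          rw [← h, ← heq] at h2
          linarith
      -- orbits of x and y are uniformly close
      have hclose : ∀ t, dist (φ t x) (φ t y) < δ2 := by
        intro t
        have h1 : dist (φ t x) (φ (s t) y) < δ2/2 :=
          (hmax2 t).trans_le ((min_le_right _ _).trans (min_le_left _ _))
        have heq : φ (s t) y = φ (s t - t) (φ t y) := by
          rw [← hadd, show s t - t + t = s t by ring]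
        have h2 : dist (φ (s t) y) (φ t y) < δ2/2 := by
          rw [heq]
          exact hMod (φ t y) (s t - t) ((hsync t).le.trans (min_le_left _ _))
        calc dist (φ t x) (φ t y)
            ≤ dist (φ t x) (φ (s t) y) + dist (φ (s t) y) (φ t y) := dist_triangle _ _ _
          _ < δ2/2 + δ2/2 := by linarith
          _ = δ2 := by ring
      exact hk x y hclose
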